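/- Time-shift property of the Skorohod solution: let T > 0, let f : [0,T] → ℝ be continuous with f(0) ≥ 0, and let 0 ≤ s ≤ t ≤ T. Define g : [0, T−s] → ℝ by g(u) := x_f(s) + f(s+u) − f(s). Then x_f(t) = x_g(t − s); that is, f(t) + sup_{0 ≤ r ≤ t} max(−f(r), 0) = g(t−s) + sup_{0 ≤ u ≤ t−s} max(−g(u), 0). -/

import Mathlib

open Set

/-- The Skorohod reflection term: `m_f(t) = sup_{0 ≤ s ≤ t} max(-f(s), 0)`. -/
noncomputable def mf (f : ℝ → ℝ) (t : ℝ) : ℝ :=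
  sSup ((fun s => max (-f s) 0) '' Set.Icc 0 t)

lemma aux_max_shift (a m : ℝ) (hm : 0 ≤ m) : max (a - m) 0 = max (max a 0 - m) 0 := by
  rcases le_total a 0 with h | h
  · rw [max_eq_right h, max_eq_right (by linarith : a - m ≤ 0),
      max_eq_right (by linarith : (0:ℝ) - m ≤ 0)]
  · rw [max_eq_left h]

/-- Time-shift property of the Skorohod solution: with
`g(u) = x_f(s) + f(s+u) - f(s)` one has `x_f(t) = x_g(t-s)` for `0 ≤ s ≤ t ≤ T`. -/
theorem stmt_2 (T : ℝ) (hT : 0 < T) (f : ℝ → ℝ)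
    (hf : ContinuousOn f (Set.Icc 0 T)) (hf0 : 0 ≤ f 0)
    (s t : ℝ) (hs : 0 ≤ s) (hst : s ≤ t) (htT : t ≤ T)
    (g : ℝ → ℝ)
    (hg : ∀ u ∈ Set.Icc 0 (T - s), g u = (f s + mf f s) + f (s + u) - f s) :
    f t + mf f t = g (t - s) + mf g (t - s) := by
  set h : ℝ → ℝ := fun r => max (-f r) 0 with hh
  have hcont : ContinuousOn h (Icc 0 T) :=
    (continuous_id.max continuous_const).comp_continuousOn hf.neg
  have hsub1 : Icc (0:ℝ) s ⊆ Icc 0 T := Icc_subset_Icc le_rfl (hst.trans htT)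
  have hsub2 : Icc s t ⊆ Icc 0 T := Icc_subset_Icc hs htT
  have hA : IsCompact (h '' Icc 0 s) :=
    isCompact_Icc.image_of_continuousOn (hcont.mono hsub1)
  have hB : IsCompact (h '' Icc s t) :=
    isCompact_Icc.image_of_continuousOn (hcont.mono hsub2)
  have hAne : (h '' Icc 0 s).Nonempty := (nonempty_Icc.2 hs).image _
  have hBne : (h '' Icc s t).Nonempty := (nonempty_Icc.2 hst).image _
  have hmA : mf f s = sSup (h '' Icc 0 s) := rfl
  set m := mf f s with hm
  set S := sSup (h '' Icc s t) with hS
  have hm0 : 0 ≤ m := by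
    have h0mem : (0:ℝ) ∈ h '' Icc 0 s := by
      refine ⟨0, ⟨le_rfl, hs⟩, ?_⟩
      simp only [hh]
      exact max_eq_right (by linarith)
    rw [hmA]
    exact le_csSup hA.bddAbove h0mem
  have hsplit : mf f t = max m S := by
    have hun : Icc (0:ℝ) t = Icc 0 s ∪ Icc s t := (Icc_union_Icc_eq_Icc hs hst).symm
    show sSup (h '' Icc 0 t) = max m S
    rw [hun, image_union, csSup_union hA.bddAbove hAne hB.bddAbove hBne, ← hmA]
  have himg : (fun u => max (-g u) 0) '' Icc 0 (t - s)
      = (fun x => max (x - m) 0) '' (h '' Icc s t) := by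
    have hIcc : Icc s t = (fun u => s + u) '' Icc 0 (t - s) := by
      rw [image_const_add_Icc]; norm_num
    rw [hIcc, image_image, image_image]
    apply image_congr
    intro u hu
    have huT : u ∈ Icc 0 (T - s) := ⟨hu.1, le_trans hu.2 (by linarith)⟩
    have hgu : g u = m + f (s + u) := by rw [hg u huT]; ring
    rw [hgu]
    have : -(m + f (s + u)) = -f (s + u) - m := by ring
    rw [this, aux_max_shift _ _ hm0]
  have hstep3 : sSup ((fun x => max (x - m) 0) '' (h '' Icc s t)) = max (S - m) 0 := by
    have hmono : Monotone (fun x : ℝ => max (x - m) 0) :=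
      fun a b hab => max_le_max (sub_le_sub_right hab m) le_rfl
    have hcontφ : ContinuousAt (fun x : ℝ => max (x - m) 0) S :=
      ((continuous_id.sub continuous_const).max continuous_const).continuousAt
    exact (Monotone.map_csSup_of_continuousAt hcontφ hmono hBne hB.bddAbove).symm
  have hgval : g (t - s) = m + f t := by
    have hmem : t - s ∈ Icc 0 (T - s) := ⟨by linarith, by linarith⟩
    rw [hg _ hmem, show s + (t - s) = t by ring]; ring
  have hmfg : mf g (t - s) = max (S - m) 0 := by
    show sSup ((fun u => max (-g u) 0) '' Icc 0 (t - s)) = _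
    rw [himg, hstep3]
  rw [hsplit, hgval, hmfg]
  rcases le_total m S with hc | hc
  · rw [max_eq_right hc, max_eq_left (by linarith : (0:ℝ) ≤ S - m)]; ring
  · rw [max_eq_left hc, max_eq_right (by linarith : S - m ≤ 0)]; ring
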